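/- Let (G,·,e,⊙) be a left group-e-semigroup. Then e⊙e is central in (G,⊙) (i.e. (e⊙e)⊙x = x⊙(e⊙e) for all x ∈ G) if and only if the semigroup (G,⊙) is a homogroup, i.e. there exists a subset H ⊆ G that is simultaneously an ideal of (G,⊙) and a group under ⊙; moreover, in that case necessarily H = e⊙G. -/
import Mathlib


/-- A subset `I` is an ideal of the semigroup `(G, op)`. -/
def IsMagmaIdeal {G : Type*} (op : G → G → G) (I : Set G) : Prop :=
  ∀ x : G, ∀ i ∈ I, op x i ∈ I ∧ op i x ∈ I

/-- A subset `H` is a subgroup of the semigroup `(G, op)`: it is closed under `op`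
and forms a group under `op`. -/
def IsSubgroupUnder {G : Type*} (op : G → G → G) (H : Set G) : Prop :=
  (∀ a ∈ H, ∀ b ∈ H, op a b ∈ H) ∧
  ∃ ι ∈ H, (∀ a ∈ H, op ι a = a ∧ op a ι = a) ∧
    ∀ a ∈ H, ∃ b ∈ H, op a b = ι ∧ op b a = ι

/-- In a left group-`e`-semigroup `(G, ·, e, ⊙)` (group identity `e = 1`),
`e ⊙ e` is central in `(G, ⊙)` iff `(G, ⊙)` is a homogroup (contains an ideal subgroup);
moreover any ideal subgroup necessarily equals `e ⊙ G`. -/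
theorem stmt_2 {G : Type*} [Group G] (op : G → G → G)
    (hassoc : ∀ x y z : G, op (op x y) z = op x (op y z))
    (hjoin : ∀ x y : G, op 1 (x * y) = op 1 (op x y)) :
    ((∀ x : G, op (op 1 1) x = op x (op 1 1)) ↔
      ∃ H : Set G, IsMagmaIdeal op H ∧ IsSubgroupUnder op H) ∧
    (∀ H : Set G, IsMagmaIdeal op H → IsSubgroupUnder op H → H = Set.range (op 1)) := by
  -- basic consequences
  have key : ∀ x y : G, op (op 1 x) y = op 1 (x * y) := fun x y =>
    (hassoc 1 x y).trans (hjoin x y).symm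
  have hu : ∀ x : G, op (op 1 1) x = op 1 x := fun x => by
    have := key 1 x; rwa [one_mul] at this
  have h1 : ∀ z : G, op (op 1 z) 1 = op 1 z := fun z => by
    have := key z 1; rwa [mul_one] at this
  have h4 : ∀ z : G, op 1 (z * op 1 1) = op 1 z := fun z => by
    rw [← key z (op 1 1), ← hassoc, h1, h1]
  have hidem : op (op 1 1) (op 1 1) = op 1 1 := by
    have h := h4 1; rw [one_mul] at h
    rw [hu]; exact h
  have hfu : ∀ x : G, op (op 1 x) (op 1 1) = op 1 x := fun x => by
    rw [key, h4]
  have hom : ∀ x y : G, op (op 1 x) (op 1 y) = op 1 (x * y) := fun x y => by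
    rw [← hu y, ← hassoc, hfu, key]
  have hfix : ∀ z : G, op (op 1 1) (op 1 z) = op 1 z := fun z => by
    rw [hom, one_mul]
  -- any ideal subgroup contains the range of `op 1`
  have hrangeSub : ∀ H : Set G, IsMagmaIdeal op H → IsSubgroupUnder op H →
      Set.range (op 1) ⊆ H := by
    rintro H hI ⟨hcl, ι, hιH, hid, hinv⟩ y ⟨p, rfl⟩
    have h := (hI (op 1 (p * ι⁻¹)) ι hιH).1
    rwa [key, inv_mul_cancel_right] at h
  -- part 2: any ideal subgroup is exactly the range of `op 1`
  have hpart2 : ∀ H : Set G, IsMagmaIdeal op H → IsSubgroupUnder op H →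
      H = Set.range (op 1) := by
    intro H hI hS
    obtain ⟨hcl, ι, hιH, hid, hinv⟩ := hS
    have hsub := hrangeSub H hI ⟨hcl, ι, hιH, hid, hinv⟩
    have huH : op 1 1 ∈ H := hsub ⟨1, rfl⟩
    have huι : op 1 1 = ι := by
      obtain ⟨b, hbH, hb1, hb2⟩ := hinv _ huH
      calc op 1 1 = op ι (op 1 1) := ((hid _ huH).1).symm
        _ = op (op b (op 1 1)) (op 1 1) := by rw [hb2]
        _ = op b (op (op 1 1) (op 1 1)) := hassoc ..
        _ = op b (op 1 1) := by rw [hidem]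
        _ = ι := hb2
    apply Set.Subset.antisymm _ hsub
    intro h hh
    have hh' := (hid h hh).1
    rw [← huι, hu] at hh'
    exact ⟨h, hh'⟩
  -- existence of an ideal subgroup forces centrality
  have hcent : ∀ H : Set G, IsMagmaIdeal op H → IsSubgroupUnder op H →
      ∀ x : G, op (op 1 1) x = op x (op 1 1) := by
    intro H hI hS x
    have hH := hpart2 H hI hS
    have hmem : op x (op 1 1) ∈ Set.range (op 1) := by
      rw [← hH]
      exact (hI x (op 1 1) (by rw [hH]; exact ⟨1, rfl⟩)).1
    obtain ⟨p, hp⟩ := hmem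
    calc op (op 1 1) x = op 1 x := hu x
      _ = op (op 1 x) (op 1 1) := (hfu x).symm
      _ = op (op (op 1 1) x) (op 1 1) := by rw [hu]
      _ = op (op 1 1) (op x (op 1 1)) := hassoc ..
      _ = op (op 1 1) (op 1 p) := by rw [hp]
      _ = op 1 p := hfix p
      _ = op x (op 1 1) := hp
  refine ⟨⟨?_, ?_⟩, hpart2⟩
  · -- centrality ⇒ the range of `op 1` is an ideal subgroup
    intro hc
    refine ⟨Set.range (op 1), ?_, ?_⟩
    · rintro x i ⟨a, rfl⟩
      constructor
      · refine ⟨x * a, ?_⟩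
        rw [← key, ← hu x, hc x, hassoc, hu]
      · exact ⟨a * x, (key a x).symm⟩
    · refine ⟨?_, op 1 1, ⟨1, rfl⟩, ?_, ?_⟩
      · rintro a ⟨p, rfl⟩ b ⟨q, rfl⟩
        exact ⟨p * q, (hom p q).symm⟩
      · rintro a ⟨p, rfl⟩
        exact ⟨hfix p, hfu p⟩
      · rintro a ⟨p, rfl⟩
        refine ⟨op 1 p⁻¹, ⟨p⁻¹, rfl⟩, ?_, ?_⟩
        · rw [hom, mul_inv_cancel]
        · rw [hom, inv_mul_cancel]
  · rintro ⟨H, hI, hS⟩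
    exact hcent H hI hS
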